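/- Let b, b̃, a, ã be locally Lipschitz in s ∈ [0,T] and globally Lipschitz in x ∈ ℝ^d, with ã(T,v) = a(T,v). Then for all x and s ∈ [0,T): ‖b(s,x) - b̃(s,x)‖ ≲ 1 + ‖x-v‖ and ‖a(s,x) - ã(s,x)‖_F ≲ (T-s) + ‖x-v‖. If moreover ‖r̃(s,x)‖ ≲ 1 + ‖x-v‖/(T-s) and ‖H̃(s,x)‖_F ≲ (T-s)⁻¹ + ‖x-v‖/(T-s), then the functional G(s,x) = (b-b̃)'r̃ - ½tr((a-ã)(H̃ - r̃r̃')) satisfies |G(s,x)| ≲ 1 + (T-s) + ‖x-v‖ + ‖x-v‖/(T-s) + ‖x-v‖²/(T-s) + ‖x-v‖³/(T-s)². -/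

import Mathlib

open Matrix

/-- Euclidean norm of a vector in `ℝ^d`. -/
noncomputable def enorm18 {d : ℕ} (y : Fin d → ℝ) : ℝ := Real.sqrt (y ⬝ᵥ y)

/-- Frobenius norm of a `d × d` real matrix. -/
noncomputable def frob18 {d : ℕ} (A : Matrix (Fin d) (Fin d) ℝ) : ℝ :=
  Real.sqrt (∑ i, ∑ j, (A i j) ^ 2)



noncomputable def vE18 {d : ℕ} (y : Fin d → ℝ) : EuclideanSpace ℝ (Fin d) := WithLp.toLp 2 y
noncomputable def mE18 {d : ℕ} (A : Matrix (Fin d) (Fin d) ℝ) :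
    EuclideanSpace ℝ (Fin d × Fin d) := WithLp.toLp 2 (fun p : Fin d × Fin d => A p.1 p.2)

lemma enorm18_eq_norm {d : ℕ} (y : Fin d → ℝ) : enorm18 y = ‖vE18 y‖ := by
  rw [EuclideanSpace.norm_eq]
  simp [enorm18, dotProduct, vE18, Real.norm_eq_abs, sq_abs, sq]

lemma frob18_eq_norm {d : ℕ} (A : Matrix (Fin d) (Fin d) ℝ) : frob18 A = ‖mE18 A‖ := by
  rw [EuclideanSpace.norm_eq, Fintype.sum_prod_type]
  simp [frob18, mE18, Real.norm_eq_abs, sq_abs]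

lemma enorm18_nonneg {d : ℕ} (y : Fin d → ℝ) : 0 ≤ enorm18 y := Real.sqrt_nonneg _
lemma frob18_nonneg {d : ℕ} (A : Matrix (Fin d) (Fin d) ℝ) : 0 ≤ frob18 A := Real.sqrt_nonneg _

lemma enorm18_add_le {d : ℕ} (x y : Fin d → ℝ) :
    enorm18 (x + y) ≤ enorm18 x + enorm18 y := by
  rw [enorm18_eq_norm, enorm18_eq_norm, enorm18_eq_norm]
  exact norm_add_le (vE18 x) (vE18 y)

lemma frob18_add_le {d : ℕ} (A B : Matrix (Fin d) (Fin d) ℝ) :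
    frob18 (A + B) ≤ frob18 A + frob18 B := by
  rw [frob18_eq_norm, frob18_eq_norm, frob18_eq_norm]
  exact norm_add_le (mE18 A) (mE18 B)

lemma frob18_sub_le {d : ℕ} (A B : Matrix (Fin d) (Fin d) ℝ) :
    frob18 (A - B) ≤ frob18 A + frob18 B := by
  rw [frob18_eq_norm, frob18_eq_norm, frob18_eq_norm]
  exact norm_sub_le (mE18 A) (mE18 B)

lemma dot18_abs_le {d : ℕ} (x y : Fin d → ℝ) :
    |x ⬝ᵥ y| ≤ enorm18 x * enorm18 y := by
  have h : x ⬝ᵥ y = inner ℝ (vE18 x) (vE18 y) := by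
    simp [dotProduct, vE18, PiLp.inner_apply, RCLike.inner_apply, mul_comm]
  rw [h, enorm18_eq_norm, enorm18_eq_norm]
  exact abs_real_inner_le_norm _ _

lemma frob18_transpose {d : ℕ} (A : Matrix (Fin d) (Fin d) ℝ) :
    frob18 Aᵀ = frob18 A := by
  unfold frob18
  rw [Finset.sum_comm]
  simp [Matrix.transpose_apply]

lemma trace18_abs_le {d : ℕ} (A B : Matrix (Fin d) (Fin d) ℝ) :
    |Matrix.trace (A * B)| ≤ frob18 A * frob18 B := by
  have h : Matrix.trace (A * B) = inner ℝ (mE18 A) (mE18 Bᵀ) := by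
    rw [PiLp.inner_apply, Fintype.sum_prod_type]
    simp [Matrix.trace, Matrix.mul_apply, Matrix.diag, mE18, RCLike.inner_apply,
      Matrix.transpose_apply, mul_comm]
  rw [h, ← frob18_transpose B, frob18_eq_norm, frob18_eq_norm]
  exact abs_real_inner_le_norm _ _

lemma frob18_vecMulVec {d : ℕ} (r : Fin d → ℝ) :
    frob18 (vecMulVec r r) = enorm18 r ^ 2 := by
  have hS : (0:ℝ) ≤ ∑ i, r i * r i := Finset.sum_nonneg fun i _ => mul_self_nonneg _
  have h1 : ∑ i, ∑ j, (vecMulVec r r i j) ^ 2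
      = (∑ i, r i * r i) * (∑ j, r j * r j) := by
    rw [Finset.sum_mul_sum]
    refine Finset.sum_congr rfl fun i _ => Finset.sum_congr rfl fun j _ => ?_
    simp [Matrix.vecMulVec_apply]
    ring
  unfold frob18 enorm18 dotProduct
  rw [h1, Real.sq_sqrt hS, Real.sqrt_mul_self hS]

lemma final18 (P1 P2 q τ : ℝ) (h1 : 0 ≤ P1) (h2 : 0 ≤ P2) (hq : 0 ≤ q) (ht : 0 ≤ τ) :
    3/2 * P1 * ((1 + q) * (1 + q * τ)) + 1/2 * P2 * (τ * (1 + q) ^ 3)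
      ≤ (3 * P1 + 3 * P2 + 1) * (1 + τ + q * τ + q + q ^ 2 * τ + q ^ 3 * τ) := by
  have m1 : 0 ≤ q * τ := mul_nonneg hq ht
  have m2 : 0 ≤ q ^ 2 * τ := mul_nonneg (pow_nonneg hq 2) ht
  have m3 : 0 ≤ q ^ 3 * τ := mul_nonneg (pow_nonneg hq 3) ht
  have hP : 0 ≤ 1 + τ + q * τ + q + q ^ 2 * τ + q ^ 3 * τ := by linarith
  have hA : (1 + q) * (1 + q * τ) ≤ 2 * (1 + τ + q * τ + q + q ^ 2 * τ + q ^ 3 * τ) := by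
    nlinarith
  have hB : τ * (1 + q) ^ 3 ≤ 6 * (1 + τ + q * τ + q + q ^ 2 * τ + q ^ 3 * τ) := by
    nlinarith
  have hA' := mul_le_mul_of_nonneg_left hA (by linarith : (0:ℝ) ≤ 3/2 * P1)
  have hB' := mul_le_mul_of_nonneg_left hB (by linarith : (0:ℝ) ≤ 1/2 * P2)
  nlinarith [mul_nonneg h1 hP, mul_nonneg h2 hP]


set_option maxHeartbeats 1000000 in
/-- Lemma 4.3: if `b, b̃, a, ã` are (locally) Lipschitz in `s` and globally
Lipschitz in `x`, and `ã(T,v) = a(T,v)`, then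
`‖b - b̃‖ ≲ 1 + ‖x-v‖` and `‖a - ã‖_F ≲ (T-s) + ‖x-v‖`; if moreover `r̃` and
`H̃` satisfy the stated bounds then `G` satisfies
`|G(s,x)| ≲ 1 + (T-s) + ‖x-v‖ + ‖x-v‖/(T-s) + ‖x-v‖²/(T-s) + ‖x-v‖³/(T-s)²`. -/
theorem stmt_18 {d : ℕ} (T : ℝ) (hT : 0 < T) (v : Fin d → ℝ)
    (b btil : ℝ → (Fin d → ℝ) → Fin d → ℝ)
    (a atil : ℝ → (Fin d → ℝ) → Matrix (Fin d) (Fin d) ℝ)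
    (L : ℝ) (hL : 0 < L)
    -- Lipschitz in `s`, uniformly in `x`, on `[0,T]`
    (hbs : ∀ x, ∀ s₁ ∈ Set.Icc (0 : ℝ) T, ∀ s₂ ∈ Set.Icc (0 : ℝ) T,
      enorm18 (b s₁ x - b s₂ x) ≤ L * |s₁ - s₂| ∧
      enorm18 (btil s₁ x - btil s₂ x) ≤ L * |s₁ - s₂| ∧
      frob18 (a s₁ x - a s₂ x) ≤ L * |s₁ - s₂| ∧
      frob18 (atil s₁ x - atil s₂ x) ≤ L * |s₁ - s₂|)
    -- global Lipschitz in `x`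
    (hbx : ∀ s ∈ Set.Icc (0 : ℝ) T, ∀ x y : Fin d → ℝ,
      enorm18 (b s x - b s y) ≤ L * enorm18 (x - y) ∧
      enorm18 (btil s x - btil s y) ≤ L * enorm18 (x - y) ∧
      frob18 (a s x - a s y) ≤ L * enorm18 (x - y) ∧
      frob18 (atil s x - atil s y) ≤ L * enorm18 (x - y))
    (haT : atil T v = a T v)
    (rtil : ℝ → (Fin d → ℝ) → Fin d → ℝ)
    (Htil : ℝ → (Fin d → ℝ) → Matrix (Fin d) (Fin d) ℝ)
    (G : ℝ → (Fin d → ℝ) → ℝ)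
    (hG : ∀ s x, G s x = (b s x - btil s x) ⬝ᵥ rtil s x
      - (1 / 2) * Matrix.trace
          ((a s x - atil s x) * (Htil s x - vecMulVec (rtil s x) (rtil s x)))) :
    (∃ C > (0 : ℝ), ∀ s ∈ Set.Ico (0 : ℝ) T, ∀ x : Fin d → ℝ,
      enorm18 (b s x - btil s x) ≤ C * (1 + enorm18 (x - v)) ∧
      frob18 (a s x - atil s x) ≤ C * ((T - s) + enorm18 (x - v))) ∧
    ((∃ Cr > (0 : ℝ), ∀ s ∈ Set.Ico (0 : ℝ) T, ∀ x : Fin d → ℝ,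
        enorm18 (rtil s x) ≤ Cr * (1 + enorm18 (x - v) / (T - s)) ∧
        frob18 (Htil s x) ≤ Cr * ((T - s)⁻¹ + enorm18 (x - v) / (T - s))) →
      ∃ C' > (0 : ℝ), ∀ s ∈ Set.Ico (0 : ℝ) T, ∀ x : Fin d → ℝ,
        |G s x| ≤ C' * (1 + (T - s) + enorm18 (x - v)
          + enorm18 (x - v) / (T - s) + enorm18 (x - v) ^ 2 / (T - s)
          + enorm18 (x - v) ^ 3 / (T - s) ^ 2)) := by
  have hM0 : 0 ≤ enorm18 (b T v - btil T v) := enorm18_nonneg _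
  set M : ℝ := enorm18 (b T v - btil T v) with hM
  have hC0 : 0 < 2 * L * T + M + 2 * L := by nlinarith
  set C : ℝ := 2 * L * T + M + 2 * L with hC
  have hTmem : T ∈ Set.Icc (0:ℝ) T := ⟨hT.le, le_rfl⟩
  have key : ∀ s ∈ Set.Ico (0:ℝ) T, ∀ x : Fin d → ℝ,
      enorm18 (b s x - btil s x) ≤ C * (1 + enorm18 (x - v)) ∧
      frob18 (a s x - atil s x) ≤ C * ((T - s) + enorm18 (x - v)) := by
    intro s hs x
    have hsI : s ∈ Set.Icc (0:ℝ) T := ⟨hs.1, hs.2.le⟩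
    have hsT : s < T := hs.2
    have hs0 : 0 ≤ s := hs.1
    have habs : |s - T| = T - s := by
      rw [abs_sub_comm]; exact abs_of_nonneg (by linarith)
    have habs' : |T - s| = T - s := abs_of_nonneg (by linarith)
    have hn0 : 0 ≤ enorm18 (x - v) := enorm18_nonneg _
    have hnvx : enorm18 (v - x) = enorm18 (x - v) := by
      rw [enorm18_eq_norm, enorm18_eq_norm]
      have h : vE18 (v - x) = -(vE18 (x - v)) := by
        unfold vE18; ext i; simp
      rw [h, norm_neg]
    constructor
    · have e1 : b s x - btil s x
          = (b s x - b s v) + ((b s v - b T v) + ((b T v - btil T v)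
            + ((btil T v - btil s v) + (btil s v - btil s x)))) := by abel
      have t1 := (hbx s hsI x v).1
      have t2 := (hbs v s hsI T hTmem).1
      have t4 := (hbs v T hTmem s hsI).2.1
      have t5 := (hbx s hsI v x).2.1
      rw [habs] at t2; rw [habs'] at t4; rw [hnvx] at t5
      have step : enorm18 (b s x - btil s x)
          ≤ L * enorm18 (x - v) + (L * (T - s) + (M + (L * (T - s) + L * enorm18 (x - v)))) := by
        rw [e1]
        refine le_trans (enorm18_add_le _ _) (add_le_add t1 ?_)
        refine le_trans (enorm18_add_le _ _) (add_le_add t2 ?_)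
        refine le_trans (enorm18_add_le _ _) (add_le_add (le_of_eq hM.symm) ?_)
        exact le_trans (enorm18_add_le _ _) (add_le_add t4 t5)
      refine le_trans step ?_
      rw [hC]
      nlinarith [mul_nonneg hL.le hs0, mul_nonneg (mul_nonneg hL.le hT.le) hn0,
        mul_nonneg hM0 hn0, mul_nonneg hL.le hn0]
    · have e2 : a s x - atil s x
          = (a s x - a s v) + ((a s v - a T v) + ((atil T v - atil s v)
            + (atil s v - atil s x))) := by rw [haT]; abel
      have t1 := (hbx s hsI x v).2.2.1
      have t2 := (hbs v s hsI T hTmem).2.2.1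
      have t3 := (hbs v T hTmem s hsI).2.2.2
      have t4 := (hbx s hsI v x).2.2.2
      rw [habs] at t2; rw [habs'] at t3; rw [hnvx] at t4
      have step : frob18 (a s x - atil s x)
          ≤ L * enorm18 (x - v) + (L * (T - s) + (L * (T - s) + L * enorm18 (x - v))) := by
        rw [e2]
        refine le_trans (frob18_add_le _ _) (add_le_add t1 ?_)
        refine le_trans (frob18_add_le _ _) (add_le_add t2 ?_)
        exact le_trans (frob18_add_le _ _) (add_le_add t3 t4)
      refine le_trans step ?_
      rw [hC]
      nlinarith [mul_nonneg (mul_nonneg hL.le hT.le) hn0, mul_nonneg hM0 hn0,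
        mul_nonneg hM0 (by linarith : (0:ℝ) ≤ T - s),
        mul_nonneg (mul_nonneg hL.le hT.le) (by linarith : (0:ℝ) ≤ T - s),
        mul_nonneg hL.le hn0, mul_nonneg hL.le (by linarith : (0:ℝ) ≤ T - s)]
  refine ⟨⟨C, hC0, key⟩, ?_⟩
  rintro ⟨Cr, hCr0, hrH⟩
  refine ⟨3 * C * Cr + 3 * C * Cr ^ 2 + 1, by positivity, ?_⟩
  intro s hs x
  obtain ⟨h1, h2⟩ := key s hs x
  obtain ⟨h3, h4⟩ := hrH s hs x
  have hn0 : 0 ≤ enorm18 (x - v) := enorm18_nonneg _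
  set n : ℝ := enorm18 (x - v) with hn
  have hτ : 0 < T - s := by linarith [hs.2]
  set τ : ℝ := T - s with hτdef
  set q : ℝ := n / τ with hq
  have hq0 : 0 ≤ q := div_nonneg hn0 hτ.le
  have hnq : n = q * τ := by rw [hq]; field_simp
  have hr0 : 0 ≤ enorm18 (rtil s x) := enorm18_nonneg _
  have hb3 : 0 ≤ Cr * (1 + n / τ) := le_trans hr0 h3
  have hdot : |(b s x - btil s x) ⬝ᵥ rtil s x| ≤ (C * (1 + n)) * (Cr * (1 + n / τ)) := by
    refine le_trans (dot18_abs_le _ _) ?_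
    exact mul_le_mul h1 h3 hr0 (by nlinarith)
  have hfr : frob18 (Htil s x - vecMulVec (rtil s x) (rtil s x))
      ≤ Cr * (τ⁻¹ + n / τ) + (Cr * (1 + n / τ)) ^ 2 := by
    refine le_trans (frob18_sub_le _ _) ?_
    refine add_le_add h4 ?_
    rw [frob18_vecMulVec]
    exact pow_le_pow_left₀ hr0 h3 2
  have htr : |Matrix.trace ((a s x - atil s x) * (Htil s x - vecMulVec (rtil s x) (rtil s x)))|
      ≤ (C * (τ + n)) * (Cr * (τ⁻¹ + n / τ) + (Cr * (1 + n / τ)) ^ 2) := by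
    refine le_trans (trace18_abs_le _ _) ?_
    exact mul_le_mul h2 hfr (frob18_nonneg _) (by nlinarith)
  have hGb : |G s x| ≤ (C * (1 + n)) * (Cr * (1 + n / τ))
      + (1/2) * ((C * (τ + n)) * (Cr * (τ⁻¹ + n / τ) + (Cr * (1 + n / τ)) ^ 2)) := by
    rw [hG s x]
    refine le_trans (abs_sub _ _) ?_
    rw [abs_mul]
    have h12 : |(1:ℝ)/2| = 1/2 := by norm_num
    rw [h12]
    exact add_le_add hdot (mul_le_mul_of_nonneg_left htr (by norm_num))
  have hform : (C * (1 + n)) * (Cr * (1 + n / τ))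
      + (1/2) * ((C * (τ + n)) * (Cr * (τ⁻¹ + n / τ) + (Cr * (1 + n / τ)) ^ 2))
      = (3/2) * C * Cr * ((1 + q) * (1 + q * τ)) + (1/2) * C * Cr ^ 2 * (τ * (1 + q) ^ 3) := by
    rw [hnq]
    field_simp
    ring
  rw [hform] at hGb
  have e3 : n ^ 2 / τ = q ^ 2 * τ := by rw [hnq]; field_simp
  have e4 : n ^ 3 / τ ^ 2 = q ^ 3 * τ := by rw [hnq]; field_simp
  have e5 : n / τ = q := hq.symm
  refine le_trans hGb ?_
  rw [e3, e4, hnq]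
  have hP1 : 0 ≤ C * Cr := by positivity
  have hP2 : 0 ≤ C * Cr ^ 2 := by positivity
  have hfin := final18 (C * Cr) (C * Cr ^ 2) q τ hP1 hP2 hq0 hτ.le
  nlinarith [hfin]
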